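/- Every ReLU-activated decoder block is a cubic spline: if β : ℝ^{n×p} → ℝ^{mh×p} is an h-headed ReLU masked attention module and φ : ℝ^{mh×p} → ℝ^{n'×p} is a ReLU feed-forward neural network applied columnwise, then the decoder block δ = φ ∘ β : ℝ^{n×p} → ℝ^{n'×p} is a matrix-valued spline of degree 3. -/

import Mathlib

noncomputable section

open Matrix

/-- The rectified linear unit. -/
def relu (x : ℝ) : ℝ := max x 0

/-- Entrywise ReLU of a matrix. -/
def matRelu {a b : ℕ} (M : Matrix (Fin a) (Fin b) ℝ) : Matrix (Fin a) (Fin b) ℝ :=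
  Matrix.of fun i j => relu (M i j)

/-- A continuous function `f : ℝ^ι → ℝ` is a (polynomial) spline of degree `k` if there are
polynomials `π_1, …, π_b`, each of total degree at most `k`, such that on every (nonempty) cell
of the induced semialgebraic sign partition, `f` agrees with a polynomial of degree at most `k`. -/
def IsSpline (ι : Type) [Fintype ι] (k : ℕ) (f : (ι → ℝ) → ℝ) : Prop :=
  Continuous f ∧
  ∃ (b : ℕ) (π : Fin b → MvPolynomial ι ℝ),
    (∀ i, (π i).totalDegree ≤ k) ∧
    ∀ θ : Fin b → SignType,
      ∃ ξ : MvPolynomial ι ℝ, ξ.totalDegree ≤ k ∧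
        ∀ x : ι → ℝ, (∀ i, SignType.sign (MvPolynomial.eval x (π i)) = θ i) →
          f x = MvPolynomial.eval x ξ

/-- A matrix-variate, matrix-valued function is a spline of degree `k` if each coordinate
function, regarded as a function of the entries of the input matrix, is a spline of degree `k`. -/
def IsMatrixSpline {n p m q : ℕ} (k : ℕ)
    (f : Matrix (Fin n) (Fin p) ℝ → Matrix (Fin m) (Fin q) ℝ) : Prop :=
  ∀ (i : Fin m) (j : Fin q),
    IsSpline (Fin n × Fin p) k (fun x => f (Matrix.of fun a b => x (a, b)) i j)

/-- The ReLU-activated masked attention module: the score matrix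
`(A_K X + B_K)ᵀ (A_Q X + B_Q)` is ReLU'd on its upper-triangular part (`i ≤ j`) and the
strictly lower-triangular entries (`i > j`) are set to `0`, before multiplying by the values. -/
def maskedAttention {n p d m : ℕ}
    (AQ AK : Matrix (Fin d) (Fin n) ℝ) (AV : Matrix (Fin m) (Fin n) ℝ)
    (BQ BK : Matrix (Fin d) (Fin p) ℝ) (BV : Matrix (Fin m) (Fin p) ℝ)
    (X : Matrix (Fin n) (Fin p) ℝ) : Matrix (Fin m) (Fin p) ℝ :=
  (AV * X + BV) *
    Matrix.of (fun i j : Fin p =>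
      if i ≤ j then relu (((AK * X + BK)ᵀ * (AQ * X + BQ)) i j) else 0)

/-- An `h`-headed ReLU masked attention module: `h` masked attention modules stacked
vertically, giving a map `ℝ^{n×p} → ℝ^{hm×p}`. -/
def multiheadMaskedAttention {n p d m h : ℕ}
    (AQ AK : Fin h → Matrix (Fin d) (Fin n) ℝ) (AV : Fin h → Matrix (Fin m) (Fin n) ℝ)
    (BQ BK : Fin h → Matrix (Fin d) (Fin p) ℝ) (BV : Fin h → Matrix (Fin m) (Fin p) ℝ)
    (X : Matrix (Fin n) (Fin p) ℝ) : Matrix (Fin (h * m)) (Fin p) ℝ :=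
  Matrix.of fun i j =>
    maskedAttention (AQ (finProdFinEquiv.symm i).1) (AK (finProdFinEquiv.symm i).1)
      (AV (finProdFinEquiv.symm i).1) (BQ (finProdFinEquiv.symm i).1)
      (BK (finProdFinEquiv.symm i).1) (BV (finProdFinEquiv.symm i).1) X
      (finProdFinEquiv.symm i).2 j

/-- ReLU feed-forward neural networks `φ(x) = A_{l+1} σ_l A_l ⋯ σ_1 A_1 x + b_{l+1}`, where
`σ_i(x) = ReLU(x + b_i)` coordinatewise: the base case is an affine map, and each additional
layer precomposes with `x ↦ ReLU(A x + b)`. -/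
inductive IsNN : ∀ {a b : ℕ}, ((Fin a → ℝ) → (Fin b → ℝ)) → Prop
  | affine {a b : ℕ} (A : Matrix (Fin b) (Fin a) ℝ) (c : Fin b → ℝ) :
      IsNN (fun x => A.mulVec x + c)
  | layer {a b c : ℕ} (A : Matrix (Fin b) (Fin a) ℝ) (v : Fin b → ℝ)
      {g : (Fin b → ℝ) → (Fin c → ℝ)} (hg : IsNN g) :
      IsNN (fun x => g (fun i => relu (A.mulVec x i + v i)))

/-- Apply a map `φ : ℝ^a → ℝ^c` columnwise to a matrix `X ∈ ℝ^{a×p}`. -/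
def colwise {a c p : ℕ} (φ : (Fin a → ℝ) → (Fin c → ℝ))
    (X : Matrix (Fin a) (Fin p) ℝ) : Matrix (Fin c) (Fin p) ℝ :=
  Matrix.of fun i j => φ (fun r => X r j) i


/-! ### Auxiliary spline closure lemmas -/

section SplineLemmas

variable {ι : Type} [Fintype ι]

theorem isSpline_poly (k : ℕ) (ξ : MvPolynomial ι ℝ) (h : ξ.totalDegree ≤ k) :
    IsSpline ι k (fun x => MvPolynomial.eval x ξ) := by
  refine ⟨ξ.continuous_eval, 0, Fin.elim0, fun i => i.elim0, fun θ => ⟨ξ, h, fun x _ => rfl⟩⟩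

theorem isSpline_const (k : ℕ) (c : ℝ) : IsSpline ι k (fun _ => c) := by
  have := isSpline_poly (ι := ι) k (MvPolynomial.C c)
    (by simp [MvPolynomial.totalDegree_C])
  simpa using this

theorem isSpline_coord (k : ℕ) (hk : 1 ≤ k) (s : ι) : IsSpline ι k (fun x => x s) := by
  have := isSpline_poly (ι := ι) k (MvPolynomial.X s)
    (by simpa [MvPolynomial.totalDegree_X] using hk)
  simpa using this

theorem isSpline_mono {k k' : ℕ} (h : k ≤ k') {f : (ι → ℝ) → ℝ} (hf : IsSpline ι k f) :
    IsSpline ι k' f := by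
  obtain ⟨hc, b, π, hπ, H⟩ := hf
  refine ⟨hc, b, π, fun i => (hπ i).trans h, fun θ => ?_⟩
  obtain ⟨ξ, hξ, hx⟩ := H θ
  exact ⟨ξ, hξ.trans h, hx⟩

theorem isSpline_add {k : ℕ} {f g : (ι → ℝ) → ℝ} (hf : IsSpline ι k f) (hg : IsSpline ι k g) :
    IsSpline ι k (fun x => f x + g x) := by
  obtain ⟨hcf, b1, π1, hπ1, H1⟩ := hf
  obtain ⟨hcg, b2, π2, hπ2, H2⟩ := hg
  refine ⟨hcf.add hcg, b1 + b2, Fin.append π1 π2, ?_, fun θ => ?_⟩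
  · intro i
    induction i using Fin.addCases with
    | left i => rw [Fin.append_left]; exact hπ1 i
    | right i => rw [Fin.append_right]; exact hπ2 i
  · obtain ⟨ξ1, hξ1, hx1⟩ := H1 (fun i => θ (Fin.castAdd b2 i))
    obtain ⟨ξ2, hξ2, hx2⟩ := H2 (fun i => θ (Fin.natAdd b1 i))
    refine ⟨ξ1 + ξ2, (MvPolynomial.totalDegree_add _ _).trans (max_le hξ1 hξ2), fun x hx => ?_⟩
    show f x + g x = _
    rw [map_add, hx1 x fun i => by rw [← hx]; rw [Fin.append_left],
      hx2 x fun i => by rw [← hx]; rw [Fin.append_right]]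

theorem isSpline_mul {k1 k2 : ℕ} {f g : (ι → ℝ) → ℝ}
    (hf : IsSpline ι k1 f) (hg : IsSpline ι k2 g) :
    IsSpline ι (k1 + k2) (fun x => f x * g x) := by
  obtain ⟨hcf, b1, π1, hπ1, H1⟩ := hf
  obtain ⟨hcg, b2, π2, hπ2, H2⟩ := hg
  refine ⟨hcf.mul hcg, b1 + b2, Fin.append π1 π2, ?_, fun θ => ?_⟩
  · intro i
    induction i using Fin.addCases with
    | left i => rw [Fin.append_left]; exact (hπ1 i).trans (Nat.le_add_right _ _)
    | right i => rw [Fin.append_right]; exact (hπ2 i).trans (Nat.le_add_left _ _)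
  · obtain ⟨ξ1, hξ1, hx1⟩ := H1 (fun i => θ (Fin.castAdd b2 i))
    obtain ⟨ξ2, hξ2, hx2⟩ := H2 (fun i => θ (Fin.natAdd b1 i))
    refine ⟨ξ1 * ξ2, (MvPolynomial.totalDegree_mul _ _).trans (Nat.add_le_add hξ1 hξ2),
      fun x hx => ?_⟩
    show f x * g x = _
    rw [_root_.map_mul, hx1 x fun i => by rw [← hx]; rw [Fin.append_left],
      hx2 x fun i => by rw [← hx]; rw [Fin.append_right]]

theorem isSpline_sum {k : ℕ} {α : Type*} (s : Finset α) (f : α → (ι → ℝ) → ℝ)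
    (hf : ∀ a ∈ s, IsSpline ι k (f a)) :
    IsSpline ι k (fun x => ∑ a ∈ s, f a x) := by
  classical
  induction s using Finset.induction with
  | empty => simpa using isSpline_const (ι := ι) k 0
  | insert a s ha ih =>
    simp only [Finset.sum_insert ha]
    exact isSpline_add (hf a (Finset.mem_insert_self a s))
      (ih fun b hb => hf b (Finset.mem_insert_of_mem hb))

theorem isSpline_relu {k : ℕ} {f : (ι → ℝ) → ℝ} (hf : IsSpline ι k f) :
    IsSpline ι k (fun x => relu (f x)) := by
  obtain ⟨hc, b, π, hπ, H⟩ := hf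
  choose ξ hξdeg hξ using H
  let N := Fintype.card (Fin b → SignType)
  let e : (Fin b → SignType) ≃ Fin N := Fintype.equivFin _
  refine ⟨(continuous_id.max continuous_const).comp hc, b + N,
    Fin.append π (fun j => ξ (e.symm j)), ?_, fun θ => ?_⟩
  · intro i
    induction i using Fin.addCases with
    | left i => rw [Fin.append_left]; exact hπ i
    | right i => rw [Fin.append_right]; exact hξdeg _
  · set θ0 : Fin b → SignType := fun i => θ (Fin.castAdd N i) with hθ0
    refine ⟨if θ (Fin.natAdd b (e θ0)) = SignType.pos then ξ θ0 else 0, ?_, fun x hx => ?_⟩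
    · split
      · exact hξdeg _
      · simp
    · have hfx : f x = MvPolynomial.eval x (ξ θ0) :=
        hξ θ0 x fun i => by
          have h := hx (Fin.castAdd N i)
          rw [Fin.append_left] at h
          exact h
      have hsign : SignType.sign (MvPolynomial.eval x (ξ θ0)) = θ (Fin.natAdd b (e θ0)) := by
        rw [← hx (Fin.natAdd b (e θ0)), Fin.append_right, Equiv.symm_apply_apply]
      show relu (f x) = _
      rw [hfx]
      split
      · rename_i hpos
        rw [hpos, SignType.pos_eq_one, sign_eq_one_iff] at hsign
        simp [relu, max_eq_left hsign.le]
      · rename_i hnp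
        have : MvPolynomial.eval x (ξ θ0) ≤ 0 := by
          rcases lt_trichotomy (MvPolynomial.eval x (ξ θ0)) 0 with h | h | h
          · exact h.le
          · exact h.le
          · exact absurd (by rw [← hsign, sign_eq_one_iff.mpr h, SignType.pos_eq_one]) hnp
        simp [relu, max_eq_right this]

theorem isSpline_affineCombo {k a : ℕ} (A : Fin a → ℝ) (c : ℝ)
    (g : Fin a → (ι → ℝ) → ℝ) (hg : ∀ r, IsSpline ι k (g r)) :
    IsSpline ι k (fun x => (∑ r, A r * g r x) + c) :=
  isSpline_add
    (isSpline_sum Finset.univ _ fun r _ => by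
      simpa using isSpline_mul (isSpline_const 0 (A r)) (hg r))
    (isSpline_const k c)

end SplineLemmas

/-! ### Neural networks preserve cubic splines -/

theorem isNN_spline {ι : Type} [Fintype ι] {a c : ℕ} {φ : (Fin a → ℝ) → (Fin c → ℝ)}
    (hφ : IsNN φ) :
    ∀ (g : Fin a → (ι → ℝ) → ℝ), (∀ r, IsSpline ι 3 (g r)) →
      ∀ i, IsSpline ι 3 (fun x => φ (fun r => g r x) i) := by
  induction hφ with
  | affine A c =>
    intro g hg i
    have heq : (fun x => (fun y => A.mulVec y + c) (fun r => g r x) i)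
        = fun x => (∑ r, A i r * g r x) + c i := by
      funext x
      simp [Matrix.mulVec, dotProduct]
    rw [heq]
    exact isSpline_affineCombo _ _ _ hg
  | layer A v hg ih =>
    intro g hgs i
    exact ih (fun i' x => relu (A.mulVec (fun r => g r x) i' + v i'))
      (fun i' => by
        have heq : (fun x => A.mulVec (fun r => g r x) i' + v i')
            = fun x => (∑ r, A i' r * g r x) + v i' := by
          funext x
          simp [Matrix.mulVec, dotProduct]
        have h := isSpline_affineCombo (ι := ι) (A i') (v i') g hgs
        exact isSpline_relu (heq ▸ h)) i

/-! ### Masked attention entries are cubic splines -/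

theorem maskedAttention_spline {n p d m : ℕ}
    (AQ AK : Matrix (Fin d) (Fin n) ℝ) (AV : Matrix (Fin m) (Fin n) ℝ)
    (BQ BK : Matrix (Fin d) (Fin p) ℝ) (BV : Matrix (Fin m) (Fin p) ℝ)
    (i : Fin m) (j : Fin p) :
    IsSpline (Fin n × Fin p) 3
      (fun x => maskedAttention AQ AK AV BQ BK BV (Matrix.of fun a b => x (a, b)) i j) := by
  have heq : (fun x : Fin n × Fin p → ℝ =>
        maskedAttention AQ AK AV BQ BK BV (Matrix.of fun a b => x (a, b)) i j)
      = fun x => ∑ j' : Fin p,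
          ((∑ t, AV i t * x (t, j')) + BV i j') *
          (if j' ≤ j then
            relu (∑ s, ((∑ t, AK s t * x (t, j')) + BK s j') *
              ((∑ t, AQ s t * x (t, j)) + BQ s j))
          else 0) := by
    funext x
    simp [maskedAttention, Matrix.mul_apply, Matrix.add_apply, Matrix.transpose_apply, mul_comm]
  rw [heq]
  refine isSpline_sum Finset.univ _ fun j' _ => ?_
  have h1 : IsSpline (Fin n × Fin p) 1 (fun x => (∑ t, AV i t * x (t, j')) + BV i j') :=
    isSpline_affineCombo _ _ _ fun t => isSpline_coord 1 le_rfl (t, j')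
  have h2 : IsSpline (Fin n × Fin p) 2
      (fun x => if j' ≤ j then
          relu (∑ s, ((∑ t, AK s t * x (t, j')) + BK s j') *
            ((∑ t, AQ s t * x (t, j)) + BQ s j))
        else 0) := by
    by_cases hle : j' ≤ j
    · simp only [if_pos hle]
      refine isSpline_relu (isSpline_sum Finset.univ _ fun s _ => ?_)
      exact isSpline_mul
        (isSpline_affineCombo _ _ _ fun t => isSpline_coord 1 le_rfl (t, j'))
        (isSpline_affineCombo _ _ _ fun t => isSpline_coord 1 le_rfl (t, j))
    · simp only [if_neg hle]
      exact isSpline_const 2 0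
  exact isSpline_mul h1 h2


/-- Every ReLU-activated decoder block — a multihead ReLU masked attention module followed by a
ReLU feed-forward neural network applied columnwise — is a cubic spline. -/
theorem decoder_block_is_cubic_spline (n p d m h n' : ℕ)
    (AQ AK : Fin h → Matrix (Fin d) (Fin n) ℝ) (AV : Fin h → Matrix (Fin m) (Fin n) ℝ)
    (BQ BK : Fin h → Matrix (Fin d) (Fin p) ℝ) (BV : Fin h → Matrix (Fin m) (Fin p) ℝ)
    (φ : (Fin (h * m) → ℝ) → (Fin n' → ℝ)) (hφ : IsNN φ) :
    IsMatrixSpline 3 (fun X => colwise φ (multiheadMaskedAttention AQ AK AV BQ BK BV X)) := by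
  intro i j
  exact isNN_spline hφ
    (fun r x => multiheadMaskedAttention AQ AK AV BQ BK BV (Matrix.of fun a b => x (a, b)) r j)
    (fun r => maskedAttention_spline _ _ _ _ _ _ _ _) i
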